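/- arXiv:2012.00470 — 2 statements merged into one kernel-verified Lean document; each statement's English description precedes it below -/
import Mathlib

section
/- Let Z ∈ R^{nd×d} be the block matrix with all n blocks equal to I_d, and let S ∈ R^{nd×d} have each d×d block orthogonal. If min_{Q ∈ O(d)} ‖S − Z Q‖_F ≤ ε√(nd), then every singular value σ_i(Z^⊤ S) satisfies (1 − ε²d/2)·n ≤ σ_i(Z^⊤ S) ≤ n. -/
open Matrix BigOperators

noncomputable def frob {m n : Type*} [Fintype m] [Fintype n] (A : Matrix m n ℝ) : ℝ :=
  Real.sqrt (∑ i, ∑ j, (A i j) ^ 2)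

def IsOrtho {d : ℕ} (Q : Matrix (Fin d) (Fin d) ℝ) : Prop :=
  Q * Qᵀ = 1 ∧ Qᵀ * Q = 1

noncomputable def dF {m : Type*} [Fintype m] {d : ℕ}
    (X Y : Matrix m (Fin d) ℝ) : ℝ :=
  sInf {r : ℝ | ∃ Q : Matrix (Fin d) (Fin d) ℝ, IsOrtho Q ∧ r = frob (X - Y * Q)}

/-- The block matrix `Z` consisting of `n` copies of `I_d`. -/
def Zmat (n d : ℕ) : Matrix (Fin n × Fin d) (Fin d) ℝ :=
  Matrix.of fun p j => if p.2 = j then 1 else 0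

/-- The `i`-th `d × d` block of an `nd × d` matrix. -/
def blk {n d : ℕ} (X : Matrix (Fin n × Fin d) (Fin d) ℝ) (i : Fin n) :
    Matrix (Fin d) (Fin d) ℝ :=
  Matrix.of fun a b => X (i, a) b

/-- The singular values of a square real matrix. -/
noncomputable def sv {d : ℕ} (A : Matrix (Fin d) (Fin d) ℝ) (i : Fin d) : ℝ :=
  Real.sqrt ((Matrix.isHermitian_conjTranspose_mul_self A).eigenvalues i)

/-! ### Auxiliary lemmas -/

lemma conjT_real {m n : Type*} [Fintype m] [Fintype n] (V : Matrix m n ℝ) : Vᴴ = Vᵀ := by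
  ext a b; simp [Matrix.conjTranspose_apply]

lemma star_real {d : ℕ} (V : Matrix (Fin d) (Fin d) ℝ) : star V = Vᵀ := by
  rw [Matrix.star_eq_conjTranspose, conjT_real]

lemma spectral_cols {d : ℕ} (B : Matrix (Fin d) (Fin d) ℝ) :
    ∃ V : Matrix (Fin d) (Fin d) ℝ, Vᵀ * V = 1 ∧ V * Vᵀ = 1 ∧
      Vᵀ * (Bᵀ * B) * V =
        diagonal ((Matrix.isHermitian_conjTranspose_mul_self B).eigenvalues) := by
  set hB := Matrix.isHermitian_conjTranspose_mul_self B
  refine ⟨(hB.eigenvectorUnitary : Matrix (Fin d) (Fin d) ℝ), ?_, ?_, ?_⟩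
  · rw [← star_real]; exact Unitary.coe_star_mul_self _
  · rw [← star_real]; exact Unitary.coe_mul_star_self _
  · have h : star (hB.eigenvectorUnitary : Matrix (Fin d) (Fin d) ℝ) * (Bᴴ * B) *
        (hB.eigenvectorUnitary : Matrix (Fin d) (Fin d) ℝ) =
        diagonal (RCLike.ofReal ∘ hB.eigenvalues) := by
      have := Matrix.IsHermitian.conjStarAlgAut_star_eigenvectorUnitary hB
      rwa [Unitary.conjStarAlgAut_star_apply] at this
    rw [star_real] at h
    rw [← conjT_real B, h]
    congr 1

lemma col_unit {d : ℕ} {V : Matrix (Fin d) (Fin d) ℝ} (hV : Vᵀ * V = 1) (j : Fin d) :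
    ∑ a, V a j ^ 2 = 1 := by
  have := congrFun (congrFun hV j) j
  simp only [Matrix.mul_apply, Matrix.transpose_apply, Matrix.one_apply_eq] at this
  simpa [sq] using this

lemma col_eval {d : ℕ} {B V : Matrix (Fin d) (Fin d) ℝ}
    (hD : Vᵀ * (Bᵀ * B) * V =
      diagonal ((Matrix.isHermitian_conjTranspose_mul_self B).eigenvalues)) (j : Fin d) :
    ∑ a, (B * V) a j ^ 2 = (Matrix.isHermitian_conjTranspose_mul_self B).eigenvalues j := by
  have h2 : (B * V)ᵀ * (B * V) =
      diagonal ((Matrix.isHermitian_conjTranspose_mul_self B).eigenvalues) := by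
    rw [Matrix.transpose_mul, mul_assoc, ← mul_assoc Bᵀ B V, ← mul_assoc, ← hD]
  have := congrFun (congrFun h2 j) j
  simp only [Matrix.mul_apply, Matrix.transpose_apply, Matrix.diagonal_apply_eq] at this
  simpa [sq, Matrix.mul_apply] using this

lemma trace_le_sum_sv {d : ℕ} (B : Matrix (Fin d) (Fin d) ℝ) :
    B.trace ≤ ∑ j, sv B j := by
  obtain ⟨V, hVV, hVVt, hD⟩ := spectral_cols B
  have htr : B.trace = ∑ j, ∑ a, V a j * (B * V) a j := by
    have : (Vᵀ * B * V).trace = B.trace := by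
      rw [Matrix.trace_mul_cycle, hVVt, one_mul]
    rw [← this, Matrix.trace]
    apply Finset.sum_congr rfl
    intro j _
    simp only [Matrix.diag_apply, Matrix.mul_apply, Matrix.transpose_apply,
      Finset.sum_mul, Finset.mul_sum]
    rw [Finset.sum_comm]
    exact Finset.sum_congr rfl fun a _ => Finset.sum_congr rfl fun b _ => by ring
  rw [htr]
  apply Finset.sum_le_sum
  intro j _
  calc ∑ a, V a j * (B * V) a j
      ≤ Real.sqrt (∑ a, V a j ^ 2) * Real.sqrt (∑ a, (B * V) a j ^ 2) :=
        Real.sum_mul_le_sqrt_mul_sqrt _ _ _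
    _ = sv B j := by rw [col_unit hVV, col_eval hD, Real.sqrt_one, one_mul, sv]

lemma A_eq (n d : ℕ) (S : Matrix (Fin n × Fin d) (Fin d) ℝ) :
    (Zmat n d)ᵀ * S = ∑ i, blk S i := by
  ext a b
  simp [Matrix.mul_apply, Zmat, blk, Matrix.transpose_apply, Matrix.sum_apply,
    Fintype.sum_prod_type, ite_mul]

lemma mulVec_orth_norm {d : ℕ} {M : Matrix (Fin d) (Fin d) ℝ} (h : Mᵀ * M = 1)
    (x : Fin d → ℝ) : ∑ b, (M *ᵥ x) b ^ 2 = ∑ b, x b ^ 2 := by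
  have key : x ⬝ᵥ ((Mᵀ * M) *ᵥ x) = (M *ᵥ x) ⬝ᵥ (M *ᵥ x) := by
    rw [← Matrix.mulVec_mulVec, Matrix.dotProduct_mulVec, Matrix.vecMul_transpose]
  rw [h, Matrix.one_mulVec] at key
  simp only [dotProduct, sq] at key ⊢
  rw [key]

lemma quad_bound (n d : ℕ) (S : Matrix (Fin n × Fin d) (Fin d) ℝ)
    (hS : ∀ i : Fin n, IsOrtho (blk S i)) (x : Fin d → ℝ) :
    ∑ b, (((Zmat n d)ᵀ * S) *ᵥ x) b ^ 2 ≤ (n : ℝ) ^ 2 * ∑ b, x b ^ 2 := by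
  set w := ((Zmat n d)ᵀ * S) *ᵥ x with hw
  set L := ∑ b, w b ^ 2 with hLdef
  set X := ∑ b, x b ^ 2 with hXdef
  have hL0 : 0 ≤ L := Finset.sum_nonneg fun b _ => sq_nonneg _
  have hX0 : 0 ≤ X := Finset.sum_nonneg fun b _ => sq_nonneg _
  have hwsum : w = ∑ i, (blk S i) *ᵥ x := by
    rw [hw, A_eq]
    ext b
    simp only [Matrix.mulVec, dotProduct, Matrix.sum_apply, Finset.sum_apply,
      Finset.sum_mul]
    exact Finset.sum_comm
  have hui : ∀ i : Fin n, ∑ b, ((blk S i) *ᵥ x) b ^ 2 = X :=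
    fun i => mulVec_orth_norm (hS i).2 x
  have key : L ≤ n * (Real.sqrt X * Real.sqrt L) := by
    have h1 : L = ∑ i : Fin n, ∑ b, ((blk S i) *ᵥ x) b * w b := by
      rw [Finset.sum_comm]
      simp only [hLdef, sq]
      apply Finset.sum_congr rfl
      intro b _
      rw [← Finset.sum_mul]
      congr 1
      rw [hwsum]
      simp [Finset.sum_apply]
    refine le_trans (le_of_eq h1) ?_
    calc ∑ i : Fin n, ∑ b, ((blk S i) *ᵥ x) b * w b
        ≤ ∑ i : Fin n, Real.sqrt X * Real.sqrt L := by
          apply Finset.sum_le_sum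
          intro i _
          calc ∑ b, ((blk S i) *ᵥ x) b * w b
              ≤ Real.sqrt (∑ b, ((blk S i) *ᵥ x) b ^ 2) * Real.sqrt (∑ b, w b ^ 2) :=
                Real.sum_mul_le_sqrt_mul_sqrt _ _ _
            _ = Real.sqrt X * Real.sqrt L := by rw [hui i]
      _ = n * (Real.sqrt X * Real.sqrt L) := by simp [mul_comm]
  rcases eq_or_lt_of_le (Real.sqrt_nonneg L) with h0 | h0
  · have hL : L = 0 := le_antisymm (Real.sqrt_eq_zero'.mp h0.symm) hL0
    rw [hL]
    positivity
  · have hsL : Real.sqrt L * Real.sqrt L ≤ (n * Real.sqrt X) * Real.sqrt L := by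
      rw [Real.mul_self_sqrt hL0]
      calc L ≤ n * (Real.sqrt X * Real.sqrt L) := key
        _ = (n * Real.sqrt X) * Real.sqrt L := by ring
    have h2 : Real.sqrt L ≤ n * Real.sqrt X := le_of_mul_le_mul_right hsL h0
    calc L = Real.sqrt L ^ 2 := (Real.sq_sqrt hL0).symm
      _ ≤ (n * Real.sqrt X) ^ 2 := by
          apply pow_le_pow_left₀ (Real.sqrt_nonneg L) h2
      _ = (n : ℝ) ^ 2 * X := by
          rw [mul_pow, Real.sq_sqrt hX0]

lemma sv_le_n (n d : ℕ) (S : Matrix (Fin n × Fin d) (Fin d) ℝ)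
    (hS : ∀ i : Fin n, IsOrtho (blk S i)) (j : Fin d) :
    sv ((Zmat n d)ᵀ * S) j ≤ n := by
  set A := (Zmat n d)ᵀ * S with hA
  obtain ⟨V, hVV, _, hD⟩ := spectral_cols A
  have he : (Matrix.isHermitian_conjTranspose_mul_self A).eigenvalues j ≤ (n : ℝ) ^ 2 := by
    rw [← col_eval hD j]
    have hcol : ∀ a, (A * V) a j = (A *ᵥ fun c => V c j) a := by
      intro a; simp [Matrix.mul_apply, Matrix.mulVec, dotProduct]
    calc ∑ a, (A * V) a j ^ 2 = ∑ a, ((A *ᵥ fun c => V c j) a) ^ 2 := by simp_rw [hcol]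
      _ ≤ (n : ℝ) ^ 2 * ∑ a, V a j ^ 2 := quad_bound n d S hS _
      _ = (n : ℝ) ^ 2 := by rw [col_unit hVV, mul_one]
  calc sv A j ≤ Real.sqrt ((n : ℝ) ^ 2) := Real.sqrt_le_sqrt he
    _ = n := by rw [Real.sqrt_sq (by positivity)]

lemma eig_congr {m : Type*} [Fintype m] [DecidableEq m] {M N : Matrix m m ℝ}
    (h : M = N) (hM : M.IsHermitian) (hN : N.IsHermitian) :
    hM.eigenvalues = hN.eigenvalues := by subst h; rfl

lemma sv_eq_of_gram_eq {d : ℕ} {B C : Matrix (Fin d) (Fin d) ℝ}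
    (h : Bᴴ * B = Cᴴ * C) : sv B = sv C := by
  funext j
  unfold sv
  rw [eig_congr h (Matrix.isHermitian_conjTranspose_mul_self B)
    (Matrix.isHermitian_conjTranspose_mul_self C)]

lemma trace_ortho_le (n d : ℕ) (S : Matrix (Fin n × Fin d) (Fin d) ℝ)
    (Q : Matrix (Fin d) (Fin d) ℝ) (hQ : IsOrtho Q) :
    (Qᵀ * ((Zmat n d)ᵀ * S)).trace ≤ ∑ j, sv ((Zmat n d)ᵀ * S) j := by
  set A := (Zmat n d)ᵀ * S with hA
  have hg : (Qᵀ * A)ᴴ * (Qᵀ * A) = Aᴴ * A := by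
    rw [conjT_real, conjT_real, Matrix.transpose_mul, Matrix.transpose_transpose,
      mul_assoc, ← mul_assoc Q Qᵀ A, hQ.1, one_mul]
  have h := trace_le_sum_sv (Qᵀ * A)
  rwa [sv_eq_of_gram_eq hg] at h

lemma sum_sq_blk {d : ℕ} {M : Matrix (Fin d) (Fin d) ℝ} (h : Mᵀ * M = 1) :
    ∑ a, ∑ b, M a b ^ 2 = (d : ℝ) := by
  have h1 : (Mᵀ * M).trace = ∑ b, ∑ a, M a b ^ 2 := by
    simp [Matrix.trace, Matrix.diag, Matrix.mul_apply, sq]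
  rw [h, Matrix.trace_one] at h1
  rw [Finset.sum_comm, ← h1]
  simp

lemma trace_tmul {d : ℕ} (Q M : Matrix (Fin d) (Fin d) ℝ) :
    (Qᵀ * M).trace = ∑ a, ∑ b, Q a b * M a b := by
  rw [Matrix.trace]
  simp only [Matrix.diag_apply, Matrix.mul_apply, Matrix.transpose_apply]
  exact Finset.sum_comm

lemma frob_sq_eq (n d : ℕ) (S : Matrix (Fin n × Fin d) (Fin d) ℝ)
    (hS : ∀ i : Fin n, IsOrtho (blk S i)) (Q : Matrix (Fin d) (Fin d) ℝ)
    (hQ : IsOrtho Q) :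
    frob (S - Zmat n d * Q) ^ 2
      = 2 * ((n : ℝ) * d) - 2 * ((Qᵀ * ((Zmat n d)ᵀ * S)).trace) := by
  have hnn : (0:ℝ) ≤ ∑ p, ∑ b, (S - Zmat n d * Q) p b ^ 2 :=
    Finset.sum_nonneg fun p _ => Finset.sum_nonneg fun b _ => sq_nonneg _
  have h0 : frob (S - Zmat n d * Q) ^ 2 = ∑ p, ∑ b, (S - Zmat n d * Q) p b ^ 2 :=
    Real.sq_sqrt hnn
  have hZQ : ∀ (p : Fin n × Fin d) (b : Fin d), (Zmat n d * Q) p b = Q p.2 b := by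
    intro p b
    simp [Matrix.mul_apply, Zmat]
  have hterm : ∀ i : Fin n, ∑ a, ∑ b, (S ((i, a) : Fin n × Fin d) b - Q a b) ^ 2
      = 2 * (d : ℝ) - 2 * (Qᵀ * blk S i).trace := by
    intro i
    have e1 : ∑ a, ∑ b, (blk S i) a b ^ 2 = (d : ℝ) := sum_sq_blk (hS i).2
    have e2 : ∑ a, ∑ b, Q a b ^ 2 = (d : ℝ) := sum_sq_blk hQ.2
    have e3 := trace_tmul Q (blk S i)
    have expand : ∀ a b : Fin d, (S ((i, a) : Fin n × Fin d) b - Q a b) ^ 2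
        = (blk S i) a b ^ 2 - 2 * (Q a b * (blk S i) a b) + Q a b ^ 2 := by
      intro a b
      simp only [blk, Matrix.of_apply]
      ring
    simp_rw [expand]
    simp only [Finset.sum_add_distrib, Finset.sum_sub_distrib, ← Finset.mul_sum]
    rw [e1, e2, ← e3]
    ring
  have hAtr : (Qᵀ * ((Zmat n d)ᵀ * S)).trace = ∑ i, (Qᵀ * blk S i).trace := by
    rw [A_eq, Matrix.mul_sum, Matrix.trace_sum]
  calc frob (S - Zmat n d * Q) ^ 2
      = ∑ p, ∑ b, (S - Zmat n d * Q) p b ^ 2 := h0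
    _ = ∑ i : Fin n, ∑ a, ∑ b, (S ((i, a) : Fin n × Fin d) b - Q a b) ^ 2 := by
        rw [Fintype.sum_prod_type]
        exact Finset.sum_congr rfl fun i _ => Finset.sum_congr rfl fun a _ =>
          Finset.sum_congr rfl fun b _ => by rw [Matrix.sub_apply, hZQ]
    _ = ∑ i : Fin n, (2 * (d : ℝ) - 2 * (Qᵀ * blk S i).trace) :=
        Finset.sum_congr rfl fun i _ => hterm i
    _ = 2 * ((n : ℝ) * d) - 2 * ((Qᵀ * ((Zmat n d)ᵀ * S)).trace) := by
        rw [Finset.sum_sub_distrib, Finset.sum_const, Finset.card_univ,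
          Fintype.card_fin, hAtr, ← Finset.mul_sum]
        ring

/-- All singular values of `Zᵀ S` lie in `[(1 − ε²d/2)·n, n]` when
`d_F(S, Z) ≤ ε √(nd)` and the blocks of `S` are orthogonal. -/
theorem singular_values_ZtS (n d : ℕ) (ε : ℝ)
    (S : Matrix (Fin n × Fin d) (Fin d) ℝ)
    (hS : ∀ i : Fin n, IsOrtho (blk S i))
    (hclose : dF S (Zmat n d) ≤ ε * Real.sqrt (n * d)) :
    ∀ i : Fin d,
      (1 - ε ^ 2 * d / 2) * n ≤ sv ((Zmat n d)ᵀ * S) i ∧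
      sv ((Zmat n d)ᵀ * S) i ≤ n := by
  intro i
  set A := (Zmat n d)ᵀ * S with hA
  have hub : ∀ j, sv A j ≤ n := sv_le_n n d S hS
  refine ⟨?_, hub i⟩
  set c := ε * Real.sqrt (n * d) with hc
  set T := {r : ℝ | ∃ Q : Matrix (Fin d) (Fin d) ℝ, IsOrtho Q ∧
    r = frob (S - Zmat n d * Q)} with hT
  have hdF : dF S (Zmat n d) = sInf T := rfl
  have hTne : T.Nonempty := ⟨frob (S - Zmat n d * 1), 1,
    ⟨by simp, by simp⟩, rfl⟩
  have hT0 : ∀ r ∈ T, (0:ℝ) ≤ r := by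
    rintro r ⟨Q, hQ, rfl⟩
    exact Real.sqrt_nonneg _
  have hInf0 : (0:ℝ) ≤ sInf T := le_csInf hTne hT0
  have hc0 : (0:ℝ) ≤ c := le_trans hInf0 (by rw [← hdF]; exact hclose)
  -- lower bound on the sum of the singular values
  have hsum : (n : ℝ) * d - c ^ 2 / 2 ≤ ∑ j, sv A j := by
    refine le_of_forall_pos_le_add ?_
    intro η hη
    set δ := min 1 (η / (c + 1)) with hδ
    have hδ0 : 0 < δ := lt_min one_pos (div_pos hη (by linarith))
    obtain ⟨r, hrT, hrlt⟩ := Real.lt_sInf_add_pos hTne hδ0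
    obtain ⟨Q, hQ, rfl⟩ := hrT
    have h1 : frob (S - Zmat n d * Q) < c + δ := by
      have : sInf T ≤ c := by rw [← hdF]; exact hclose
      linarith
    have h2 : frob (S - Zmat n d * Q) ^ 2 ≤ (c + δ) ^ 2 :=
      pow_le_pow_left₀ (Real.sqrt_nonneg _) h1.le 2
    rw [frob_sq_eq n d S hS Q hQ] at h2
    have h3 : (c + δ) ^ 2 ≤ c ^ 2 + 2 * η := by
      have hδ1 : δ ≤ 1 := min_le_left _ _
      have hδ2 : δ * (c + 1) ≤ η := by
        have := min_le_right (1:ℝ) (η / (c + 1))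
        calc δ * (c + 1) ≤ (η / (c + 1)) * (c + 1) := by
              apply mul_le_mul_of_nonneg_right this (by linarith)
          _ = η := by field_simp
      nlinarith [hδ0.le, hc0]
    have h5 := trace_ortho_le n d S Q hQ
    rw [← hA] at h2 h5
    linarith
  -- combine with the bound on the other singular values
  have hd1 : 1 ≤ d := i.pos
  have hothers : ∑ j ∈ Finset.univ.erase i, sv A j ≤ ((d : ℝ) - 1) * n := by
    calc ∑ j ∈ Finset.univ.erase i, sv A j
        ≤ ∑ _j ∈ Finset.univ.erase i, (n : ℝ) :=
          Finset.sum_le_sum fun j _ => hub j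
      _ = ((d : ℝ) - 1) * n := by
          rw [Finset.sum_const, Finset.card_erase_of_mem (Finset.mem_univ i),
            Finset.card_univ, Fintype.card_fin, nsmul_eq_mul, Nat.cast_sub hd1]
          norm_num
  have hsplit : ∑ j, sv A j = sv A i + ∑ j ∈ Finset.univ.erase i, sv A j :=
    (Finset.add_sum_erase _ _ (Finset.mem_univ i)).symm
  have hc2 : c ^ 2 = ε ^ 2 * ((n : ℝ) * d) := by
    rw [hc, mul_pow, Real.sq_sqrt (by positivity)]
  have hgoal : (1 - ε ^ 2 * (d : ℝ) / 2) * n = (n : ℝ) - c ^ 2 / 2 := by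
    rw [hc2]; ring
  rw [hgoal]
  have : (n : ℝ) * d - c ^ 2 / 2 ≤ sv A i + ((d : ℝ) - 1) * n := by linarith
  nlinarith [this]
end

section
/- Let S ∈ O(d)^{⊗n} with d_F(S, Z) ≤ (ε/2)√(nd), where Z has n identity blocks. Then there exists R ∈ O(d) with ‖Z^⊤S − nR‖_F ≤ ε²nd/8. -/
open Matrix BigOperators

/-! ### Auxiliary definitions and lemmas -/

/-- Squared Frobenius norm. -/
def FS {m n : Type*} [Fintype m] [Fintype n] (A : Matrix m n ℝ) : ℝ :=
  ∑ i, ∑ j, (A i j) ^ 2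

lemma frob_eq_sqrt_FS {m n : Type*} [Fintype m] [Fintype n] (A : Matrix m n ℝ) :
    frob A = Real.sqrt (FS A) := rfl

lemma FS_nonneg {m n : Type*} [Fintype m] [Fintype n] (A : Matrix m n ℝ) : 0 ≤ FS A := by
  apply Finset.sum_nonneg; intro i _; apply Finset.sum_nonneg; intro j _; positivity

lemma FS_eq_trace {m : Type*} [Fintype m] {d : ℕ} (A : Matrix m (Fin d) ℝ) :
    FS A = trace (Aᵀ * A) := by
  simp only [trace, FS, diag_apply, mul_apply, transpose_apply]
  rw [Finset.sum_comm]
  exact Finset.sum_congr rfl fun j _ => Finset.sum_congr rfl fun i _ => pow_two (A i j)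

lemma trace_std_mul {d : ℕ} (a b : Fin d) (x : ℝ) (M : Matrix (Fin d) (Fin d) ℝ) :
    trace (Matrix.single a b x * M) = x * M b a := by
  rw [trace]
  rw [Finset.sum_eq_single a]
  · simp [Matrix.diag]
  · intro k _ hk; simp [Matrix.diag, Matrix.single_mul_apply_of_ne (c := x) a b k k hk]
  · simp

lemma transpose_std {d : ℕ} (i j : Fin d) (c : ℝ) :
    (Matrix.single i j c)ᵀ = Matrix.single j i c := by
  ext a b; simp [Matrix.single, and_comm]

noncomputable def givens {d : ℕ} (i j : Fin d) (c s : ℝ) : Matrix (Fin d) (Fin d) ℝ :=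
  1 + Matrix.single i i (c-1) + Matrix.single j j (c-1)
    + Matrix.single i j s + Matrix.single j i (-s)

lemma givens_ortho {d : ℕ} {i j : Fin d} (hij : i ≠ j) {c s : ℝ} (h : c^2 + s^2 = 1) :
    IsOrtho (givens i j c s) := by
  have hji : j ≠ i := hij.symm
  constructor <;>
  · simp only [givens, transpose_add, transpose_one, transpose_std,
      Matrix.add_mul, Matrix.mul_add, Matrix.one_mul, Matrix.mul_one,
      single_mul_single_same, single_mul_single_of_ne, hij, hji, ne_eq,
      not_false_iff]
    ext a b
    simp only [Matrix.add_apply, Matrix.zero_apply, Matrix.single, of_apply]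
    by_cases hai : a = i <;> by_cases haj : a = j <;> by_cases hbi : b = i <;>
      by_cases hbj : b = j <;> simp_all [Matrix.one_apply, eq_comm] <;> nlinarith [h]

lemma trace_givens_mul {d : ℕ} (i j : Fin d) (c s : ℝ) (P : Matrix (Fin d) (Fin d) ℝ) :
    trace ((givens i j c s)ᵀ * P) =
      trace P + (c-1) * (P i i + P j j) + s * (P i j - P j i) := by
  simp only [givens, transpose_add, transpose_one, transpose_std, Matrix.add_mul,
    Matrix.one_mul, trace_add, trace_std_mul]
  ring

lemma exists_max (d : ℕ) (M : Matrix (Fin d) (Fin d) ℝ) :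
    ∃ R : Matrix (Fin d) (Fin d) ℝ, IsOrtho R ∧
      ∀ Q : Matrix (Fin d) (Fin d) ℝ, IsOrtho Q → trace (Qᵀ * M) ≤ trace (Rᵀ * M) := by
  have hO : IsClosed {Q : Matrix (Fin d) (Fin d) ℝ | IsOrtho Q} := by
    have : {Q : Matrix (Fin d) (Fin d) ℝ | IsOrtho Q} =
        (fun Q : Matrix (Fin d) (Fin d) ℝ => (Q * Qᵀ, Qᵀ * Q)) ⁻¹'
          {((1 : Matrix (Fin d) (Fin d) ℝ), (1 : Matrix (Fin d) (Fin d) ℝ))} := by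
      ext Q; simp [IsOrtho, Set.mem_preimage, Prod.ext_iff]
    rw [this]
    exact IsClosed.preimage (Continuous.prodMk
      (continuous_id.matrix_mul continuous_id.matrix_transpose)
      (continuous_id.matrix_transpose.matrix_mul continuous_id)) isClosed_singleton
  have hK : IsCompact (Set.univ.pi fun _ : Fin d => Set.univ.pi fun _ : Fin d =>
      Set.Icc (-1:ℝ) 1) :=
    isCompact_univ_pi fun _ => isCompact_univ_pi fun _ => isCompact_Icc
  have hsub : {Q : Matrix (Fin d) (Fin d) ℝ | IsOrtho Q} ⊆
      (Set.univ.pi fun _ : Fin d => Set.univ.pi fun _ : Fin d => Set.Icc (-1:ℝ) 1) := by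
    intro Q hQ
    intro a _ ; intro b _
    have h1 : ∑ c, Q a c * Q a c = 1 := by
      have := congrFun (congrFun hQ.1 a) a
      simpa [Matrix.mul_apply, Matrix.one_apply] using this
    have hsq : Q a b ^ 2 ≤ 1 := by
      rw [← h1]
      have : Q a b ^ 2 = Q a b * Q a b := sq (Q a b) ▸ by ring
      rw [this]
      exact Finset.single_le_sum (f := fun c => Q a c * Q a c)
        (fun c _ => mul_self_nonneg _) (Finset.mem_univ b)
    constructor
    · nlinarith [hsq]
    · nlinarith [hsq]
  have hcomp : IsCompact {Q : Matrix (Fin d) (Fin d) ℝ | IsOrtho Q} :=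
    hK.of_isClosed_subset hO hsub
  have hne : Set.Nonempty {Q : Matrix (Fin d) (Fin d) ℝ | IsOrtho Q} :=
    ⟨1, by constructor <;> simp⟩
  obtain ⟨R, hR, hmax⟩ := hcomp.exists_isMaxOn hne
    ((continuous_id.matrix_transpose.matrix_mul continuous_const).matrix_trace).continuousOn
  exact ⟨R, hR, fun Q hQ => hmax hQ⟩

lemma sym_of_max {d : ℕ} (P : Matrix (Fin d) (Fin d) ℝ)
    (hmax : ∀ G, IsOrtho G → trace (Gᵀ * P) ≤ trace P) : Pᵀ = P := by
  ext a b
  rcases eq_or_ne b a with rfl | hij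
  · rfl
  have key : ∀ c s : ℝ, c^2 + s^2 = 1 →
      (c-1) * (P b b + P a a) + s * (P b a - P a b) ≤ 0 := by
    intro c s hcs
    have := hmax _ (givens_ortho hij hcs)
    rw [trace_givens_mul] at this
    linarith
  set A := P b b + P a a with hA
  set B := P b a - P a b with hB
  have hfin : B = 0 := by
    set r := Real.sqrt (A^2 + B^2) with hr
    have hr0 : 0 ≤ r := Real.sqrt_nonneg _
    have hr2 : r^2 = A^2 + B^2 := Real.sq_sqrt (by positivity)
    rcases eq_or_lt_of_le hr0 with h0 | hpos
    · nlinarith [sq_nonneg A, sq_nonneg B]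
    · have hrne : r ≠ 0 := ne_of_gt hpos
      have hcs : (A/r)^2 + (B/r)^2 = 1 := by
        field_simp
        linarith [hr2]
      have h1 := key (A/r) (B/r) hcs
      have h3 : (A - r) * A + B * B ≤ 0 := by
        have h2 : r * ((A/r - 1) * A + (B/r) * B) ≤ r * 0 :=
          mul_le_mul_of_nonneg_left h1 hpos.le
        calc (A - r) * A + B * B = r * ((A/r - 1) * A + (B/r) * B) := by
              field_simp
          _ ≤ r * 0 := h2
          _ = 0 := mul_zero r
      have hrA : r ≤ A := by nlinarith [h3, hr2, hpos]
      have hb2 : B^2 = 0 := le_antisymm (by nlinarith [hr2, hrA, hpos]) (sq_nonneg B)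
      exact sq_eq_zero_iff.mp hb2
  simp only [transpose_apply]
  linarith [hfin]

lemma psd_of_max {d : ℕ} (P : Matrix (Fin d) (Fin d) ℝ)
    (hmax : ∀ G, IsOrtho G → trace (Gᵀ * P) ≤ trace P) :
    ∀ v : Fin d → ℝ, 0 ≤ v ⬝ᵥ (P *ᵥ v) := by
  have hunit : ∀ v : Fin d → ℝ, v ⬝ᵥ v = 1 → 0 ≤ v ⬝ᵥ (P *ᵥ v) := by
    intro v hv
    have hv' : ∑ c, v c * v c = 1 := hv
    set H : Matrix (Fin d) (Fin d) ℝ :=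
      Matrix.of fun a b => (if a = b then (1:ℝ) else 0) - 2 * v a * v b with hH
    have hHsym : Hᵀ = H := by
      ext a b
      simp only [transpose_apply, hH, of_apply]
      rcases eq_or_ne a b with rfl | hne
      · ring
      · rw [if_neg hne, if_neg (Ne.symm hne)]; ring
    have hHH : H * H = 1 := by
      ext a b
      rw [Matrix.mul_apply]
      have hc : ∀ c, H a c * H c b =
          (if a = c then (if c = b then (1:ℝ) else 0) else 0)
          - (2 * v b) * (if a = c then v c else 0)
          - (2 * v a) * (if c = b then v c else 0)
          + (4 * (v a * v b)) * (v c * v c) := by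
        intro c
        by_cases h1 : a = c <;> by_cases h2 : c = b <;> simp [hH, h1, h2] <;>
          (try split_ifs) <;> ring
      rw [Finset.sum_congr rfl fun c _ => hc c]
      rw [Finset.sum_add_distrib, Finset.sum_sub_distrib, Finset.sum_sub_distrib,
        ← Finset.mul_sum, ← Finset.mul_sum, ← Finset.mul_sum,
        Finset.sum_ite_eq, Finset.sum_ite_eq, Finset.sum_ite_eq', hv']
      simp only [Finset.mem_univ, if_true, Matrix.one_apply]
      ring
    have hHO : IsOrtho H := by
      constructor
      · rw [hHsym]; exact hHH
      · rw [hHsym]; exact hHH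
    have htr : trace (Hᵀ * P) = trace P - 2 * (v ⬝ᵥ (P *ᵥ v)) := by
      rw [hHsym]
      have : ∀ a : Fin d, (H * P) a a =
          P a a - (2 * v a) * (∑ c, v c * P c a) := by
        intro a
        rw [Matrix.mul_apply]
        have hc : ∀ c, H a c * P c a =
            (if a = c then P c a else 0) - (2 * v a) * (v c * P c a) := by
          intro c
          by_cases h1 : a = c <;> simp [hH, h1] <;> ring
        rw [Finset.sum_congr rfl fun c _ => hc c, Finset.sum_sub_distrib,
          ← Finset.mul_sum, Finset.sum_ite_eq]
        simp
      rw [trace]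
      simp only [Matrix.diag]
      rw [Finset.sum_congr rfl fun a _ => this a, Finset.sum_sub_distrib]
      have : ∑ a, (2 * v a) * (∑ c, v c * P c a) = 2 * (v ⬝ᵥ (P *ᵥ v)) := by
        simp only [dotProduct, mulVec, Finset.mul_sum]
        rw [Finset.sum_comm]
        exact Finset.sum_congr rfl fun c _ => Finset.sum_congr rfl fun a _ => by ring
      rw [this, trace]
      rfl
    have := hmax H hHO
    rw [htr] at this
    linarith
  intro v
  rcases eq_or_lt_of_le (show (0:ℝ) ≤ v ⬝ᵥ v from
      Finset.sum_nonneg fun i _ => mul_self_nonneg _) with h0 | hpos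
  · have hv0 : v = 0 := by
      funext i
      have := (Finset.sum_eq_zero_iff_of_nonneg
        (fun i _ => mul_self_nonneg (v i))).mp h0.symm
      exact mul_self_eq_zero.mp (this i (Finset.mem_univ i))
    simp [hv0]
  · set c : ℝ := (Real.sqrt (v ⬝ᵥ v))⁻¹ with hc
    have hst : Real.sqrt (v ⬝ᵥ v) > 0 := Real.sqrt_pos.mpr hpos
    have hcsq : c^2 * (v ⬝ᵥ v) = 1 := by
      rw [hc, ← Real.sqrt_inv]
      rw [Real.sq_sqrt (by positivity)]
      field_simp
    have hw : (c • v) ⬝ᵥ (c • v) = 1 := by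
      rw [smul_dotProduct, dotProduct_smul, smul_eq_mul, smul_eq_mul]
      linear_combination hcsq
    have := hunit (c • v) hw
    rw [smul_dotProduct, Matrix.mulVec_smul, dotProduct_smul] at this
    have hc2 : 0 < c^2 := by positivity
    have heq : c • c • (v ⬝ᵥ (P *ᵥ v)) = c^2 * (v ⬝ᵥ (P *ᵥ v)) := by
      rw [smul_eq_mul, smul_eq_mul]; ring
    rw [heq] at this
    nlinarith [this, hc2]

section Spectral

variable {d : ℕ} {P : Matrix (Fin d) (Fin d) ℝ}

lemma trace_conj (hP : P.IsHermitian) (X : Matrix (Fin d) (Fin d) ℝ) :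
    trace ((star (hP.eigenvectorUnitary : Matrix (Fin d) (Fin d) ℝ)) * X *
      (hP.eigenvectorUnitary : Matrix (Fin d) (Fin d) ℝ)) = trace X := by
  rw [trace_mul_comm, ← mul_assoc,
    mem_unitaryGroup_iff.mp (hP.eigenvectorUnitary).2, one_mul]

lemma trace_eq_sum_eig (hP : P.IsHermitian) : trace P = ∑ i, hP.eigenvalues i := by
  have h : star (hP.eigenvectorUnitary : Matrix (Fin d) (Fin d) ℝ) * P *
      (hP.eigenvectorUnitary : Matrix (Fin d) (Fin d) ℝ) =
        diagonal (RCLike.ofReal ∘ hP.eigenvalues) := by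
    have h0 := hP.conjStarAlgAut_star_eigenvectorUnitary
    rwa [Unitary.conjStarAlgAut_star_apply] at h0
  have := congrArg trace h
  rw [trace_conj hP P, trace_diagonal] at this
  simpa using this

lemma trace_sq_eq_sum_eig (hP : P.IsHermitian) :
    trace (P * P) = ∑ i, (hP.eigenvalues i)^2 := by
  have h : star (hP.eigenvectorUnitary : Matrix (Fin d) (Fin d) ℝ) * P *
      (hP.eigenvectorUnitary : Matrix (Fin d) (Fin d) ℝ) =
        diagonal (RCLike.ofReal ∘ hP.eigenvalues) := by
    have h0 := hP.conjStarAlgAut_star_eigenvectorUnitary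
    rwa [Unitary.conjStarAlgAut_star_apply] at h0
  set U := (hP.eigenvectorUnitary : Matrix (Fin d) (Fin d) ℝ) with hU
  have hUU : U * star U = 1 := mem_unitaryGroup_iff.mp (hP.eigenvectorUnitary).2
  have h2 : star U * (P * P) * U =
      diagonal (RCLike.ofReal ∘ hP.eigenvalues) *
        diagonal (RCLike.ofReal ∘ hP.eigenvalues) := by
    rw [← h]
    have : P * P = P * (U * star U) * P := by rw [hUU, mul_one]
    rw [this]
    noncomm_ring
  have := congrArg trace h2
  rw [trace_conj hP (P * P), diagonal_mul_diagonal, trace_diagonal] at this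
  simpa [sq] using this

lemma eig_dot (hP : P.IsHermitian) (i : Fin d) :
    ∃ v : Fin d → ℝ, v ⬝ᵥ v = 1 ∧ v ⬝ᵥ (P *ᵥ v) = hP.eigenvalues i := by
  have hn : ‖hP.eigenvectorBasis i‖ = 1 := hP.eigenvectorBasis.orthonormal.1 i
  have hvv : ⇑(hP.eigenvectorBasis i) ⬝ᵥ ⇑(hP.eigenvectorBasis i) = 1 := by
    have h1 := EuclideanSpace.norm_eq (hP.eigenvectorBasis i)
    rw [hn] at h1
    have h2 : ∑ k, ‖(hP.eigenvectorBasis i) k‖^2 = 1 := by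
      have := congrArg (·^2) h1.symm
      simpa [Real.sq_sqrt (Finset.sum_nonneg fun k _ => sq_nonneg _)] using this
    rw [dotProduct, ← h2]
    exact Finset.sum_congr rfl fun k _ => by rw [Real.norm_eq_abs, sq_abs, sq]
  refine ⟨⇑(hP.eigenvectorBasis i), hvv, ?_⟩
  rw [hP.mulVec_eigenvectorBasis i, dotProduct_smul, smul_eq_mul, hvv, mul_one]

end Spectral

/-- Cauchy–Schwarz for dot products of real vectors. -/
lemma dot_le_sqrt {d : ℕ} (x y : Fin d → ℝ) :
    x ⬝ᵥ y ≤ Real.sqrt ((x ⬝ᵥ x) * (y ⬝ᵥ y)) := by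
  have h := Finset.sum_mul_sq_le_sq_mul_sq Finset.univ x y
  have hx : ∑ i, x i ^ 2 = x ⬝ᵥ x := Finset.sum_congr rfl fun i _ => sq (x i)
  have hy : ∑ i, y i ^ 2 = y ⬝ᵥ y := Finset.sum_congr rfl fun i _ => sq (y i)
  rw [hx, hy] at h
  calc x ⬝ᵥ y ≤ |x ⬝ᵥ y| := le_abs_self _
    _ = Real.sqrt ((x ⬝ᵥ y)^2) := (Real.sqrt_sq_eq_abs _).symm
    _ ≤ Real.sqrt ((x ⬝ᵥ x) * (y ⬝ᵥ y)) := Real.sqrt_le_sqrt h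

lemma ortho_dot {d : ℕ} {B : Matrix (Fin d) (Fin d) ℝ} (hB : Bᵀ * B = 1)
    (v : Fin d → ℝ) : (B *ᵥ v) ⬝ᵥ (B *ᵥ v) = v ⬝ᵥ v := by
  rw [Matrix.dotProduct_mulVec, ← Matrix.mulVec_transpose, Matrix.mulVec_mulVec, hB,
    Matrix.one_mulVec]

/-- If `d_F(S, Z) ≤ (ε/2)√(nd)` then `ZᵀS` is within `ε²nd/8` (in Frobenius norm)
of `n` times some orthogonal matrix. -/
theorem ZtS_close_to_scaled_orthogonal (n d : ℕ) (ε : ℝ)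
    (S : Matrix (Fin n × Fin d) (Fin d) ℝ)
    (hS : ∀ i : Fin n, IsOrtho (blk S i))
    (hclose : dF S (Zmat n d) ≤ ε / 2 * Real.sqrt (n * d)) :
    ∃ R : Matrix (Fin d) (Fin d) ℝ, IsOrtho R ∧
      frob ((Zmat n d)ᵀ * S - (n : ℝ) • R) ≤ ε ^ 2 * n * d / 8 := by
  classical
  set M : Matrix (Fin d) (Fin d) ℝ := (Zmat n d)ᵀ * S with hMdef
  -- entries of M
  have hM : ∀ a b, M a b = ∑ i : Fin n, S (i, a) b := by
    intro a b
    rw [hMdef, Matrix.mul_apply]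
    rw [Fintype.sum_prod_type]
    apply Finset.sum_congr rfl
    intro i _
    simp [Zmat, transpose_apply, ite_mul, Finset.sum_ite_eq']
  -- the maximizer
  obtain ⟨R, hR, hmax⟩ := exists_max d M
  set P : Matrix (Fin d) (Fin d) ℝ := Rᵀ * M with hPdef
  have hmax' : ∀ G, IsOrtho G → trace (Gᵀ * P) ≤ trace P := by
    intro G hG
    have hRG : IsOrtho (R * G) := by
      constructor
      · rw [transpose_mul]
        calc R * G * (Gᵀ * Rᵀ) = R * (G * Gᵀ) * Rᵀ := by noncomm_ring
          _ = 1 := by rw [hG.1, mul_one, hR.1]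
      · rw [transpose_mul]
        calc Gᵀ * Rᵀ * (R * G) = Gᵀ * (Rᵀ * R) * G := by noncomm_ring
          _ = 1 := by rw [hR.2, mul_one, hG.2]
    have := hmax (R * G) hRG
    rwa [transpose_mul, mul_assoc] at this
  have hsym : Pᵀ = P := sym_of_max P hmax'
  have hpsd : ∀ v : Fin d → ℝ, 0 ≤ v ⬝ᵥ (P *ᵥ v) := psd_of_max P hmax'
  have hherm : P.IsHermitian := (conjTranspose_eq_transpose_of_trivial P).trans hsym
  set μ : Fin d → ℝ := hherm.eigenvalues with hμdef
  -- quadratic form bound : v⬝Pv ≤ n (v⬝v)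
  have hquad : ∀ v : Fin d → ℝ, v ⬝ᵥ (P *ᵥ v) ≤ (n:ℝ) * (v ⬝ᵥ v) := by
    intro v
    have hPv : P *ᵥ v = Rᵀ *ᵥ (M *ᵥ v) := by rw [hPdef, ← Matrix.mulVec_mulVec]
    have h1 : v ⬝ᵥ (P *ᵥ v) = (R *ᵥ v) ⬝ᵥ (M *ᵥ v) := by
      rw [hPv, Matrix.dotProduct_mulVec, ← Matrix.mulVec_transpose, transpose_transpose]
    have hMv : ∀ a, (M *ᵥ v) a = ∑ i : Fin n, ((blk S i) *ᵥ v) a := by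
      intro a
      simp only [mulVec, dotProduct, blk, of_apply]
      rw [Finset.sum_comm]
      apply Finset.sum_congr rfl
      intro b _
      rw [hM a b, Finset.sum_mul]
    have h2 : v ⬝ᵥ (P *ᵥ v) = ∑ i : Fin n, (R *ᵥ v) ⬝ᵥ ((blk S i) *ᵥ v) := by
      rw [h1]
      calc (R *ᵥ v) ⬝ᵥ (M *ᵥ v) = ∑ a, (R *ᵥ v) a * (M *ᵥ v) a := rfl
        _ = ∑ a, ∑ i : Fin n, (R *ᵥ v) a * ((blk S i) *ᵥ v) a := by
            apply Finset.sum_congr rfl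
            intro a _
            rw [hMv a, Finset.mul_sum]
        _ = ∑ i : Fin n, ∑ a, (R *ᵥ v) a * ((blk S i) *ᵥ v) a := Finset.sum_comm
        _ = ∑ i : Fin n, (R *ᵥ v) ⬝ᵥ ((blk S i) *ᵥ v) := rfl
    rw [h2]
    have hvv0 : 0 ≤ v ⬝ᵥ v := Finset.sum_nonneg fun i _ => mul_self_nonneg _
    have hterm : ∀ i : Fin n, (R *ᵥ v) ⬝ᵥ ((blk S i) *ᵥ v) ≤ v ⬝ᵥ v := by
      intro i
      calc (R *ᵥ v) ⬝ᵥ ((blk S i) *ᵥ v)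
          ≤ Real.sqrt (((R *ᵥ v) ⬝ᵥ (R *ᵥ v)) * (((blk S i) *ᵥ v) ⬝ᵥ ((blk S i) *ᵥ v))) :=
            dot_le_sqrt _ _
        _ = Real.sqrt ((v ⬝ᵥ v) * (v ⬝ᵥ v)) := by
            rw [ortho_dot hR.2 v, ortho_dot (hS i).2 v]
        _ = v ⬝ᵥ v := by rw [← sq (v ⬝ᵥ v), Real.sqrt_sq hvv0]
    calc ∑ i : Fin n, (R *ᵥ v) ⬝ᵥ ((blk S i) *ᵥ v) ≤ ∑ _i : Fin n, v ⬝ᵥ v :=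
          Finset.sum_le_sum fun i _ => hterm i
      _ = (n:ℝ) * (v ⬝ᵥ v) := by
          rw [Finset.sum_const, Finset.card_univ, Fintype.card_fin, nsmul_eq_mul]
  -- eigenvalue bounds
  have hμn : ∀ i, μ i ≤ (n:ℝ) := by
    intro i
    obtain ⟨v, hv1, hv2⟩ := eig_dot hherm i
    calc μ i = v ⬝ᵥ (P *ᵥ v) := hv2.symm
      _ ≤ (n:ℝ) * (v ⬝ᵥ v) := hquad v
      _ = (n:ℝ) := by rw [hv1, mul_one]
  have hμ0 : ∀ i, 0 ≤ μ i := by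
    intro i
    obtain ⟨v, hv1, hv2⟩ := eig_dot hherm i
    have h := hpsd v
    rw [hv2] at h
    exact h
  have htP : trace P = ∑ i, μ i := trace_eq_sum_eig hherm
  have htPP : trace (P * P) = ∑ i, (μ i)^2 := trace_sq_eq_sum_eig hherm
  -- expansion of FS (S - Z Q)
  have hZQ : ∀ (Q : Matrix (Fin d) (Fin d) ℝ) (p : Fin n × Fin d) (b : Fin d),
      (Zmat n d * Q) p b = Q p.2 b := by
    intro Q p b
    rw [Matrix.mul_apply]
    simp [Zmat, ite_mul, Finset.sum_ite_eq]
  have hFSblk : ∀ i : Fin n, (∑ a, ∑ b, (S (i,a) b)^2) = (d:ℝ) := by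
    intro i
    have h1 : FS (blk S i) = ∑ a, ∑ b, (S (i,a) b)^2 := by
      simp [FS, blk]
    have h2 : FS (blk S i) = (d:ℝ) := by
      rw [FS_eq_trace, (hS i).2, trace_one]
      simp
    rw [← h1, h2]
  have htrQ : ∀ Q : Matrix (Fin d) (Fin d) ℝ,
      trace (Qᵀ * M) = ∑ i : Fin n, ∑ a, ∑ b, S (i,a) b * Q a b := by
    intro Q
    have h1 : trace (Qᵀ * M) = ∑ b, ∑ a, Q a b * M a b := by
      simp only [trace, diag_apply, mul_apply, transpose_apply]
    rw [h1]
    calc ∑ b, ∑ a, Q a b * M a b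
        = ∑ b, ∑ a, ∑ i : Fin n, S (i,a) b * Q a b := by
          apply Finset.sum_congr rfl; intro b _
          apply Finset.sum_congr rfl; intro a _
          rw [hM a b, Finset.mul_sum]
          exact Finset.sum_congr rfl fun i _ => mul_comm _ _
      _ = ∑ b, ∑ i : Fin n, ∑ a, S (i,a) b * Q a b := by
          exact Finset.sum_congr rfl fun b _ => Finset.sum_comm
      _ = ∑ i : Fin n, ∑ b, ∑ a, S (i,a) b * Q a b := Finset.sum_comm
      _ = ∑ i : Fin n, ∑ a, ∑ b, S (i,a) b * Q a b :=
          Finset.sum_congr rfl fun i _ => Finset.sum_comm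
  have hexpand : ∀ Q : Matrix (Fin d) (Fin d) ℝ, IsOrtho Q →
      FS (S - Zmat n d * Q) = 2*((n:ℝ)*(d:ℝ)) - 2 * trace (Qᵀ * M) := by
    intro Q hQ
    have h1 : FS (S - Zmat n d * Q) = ∑ p : Fin n × Fin d, ∑ b, (S p b - Q p.2 b)^2 := by
      apply Finset.sum_congr rfl; intro p _
      apply Finset.sum_congr rfl; intro b _
      rw [Matrix.sub_apply, hZQ Q p b]
    have h2 : ∀ p : Fin n × Fin d, ∀ b : Fin d, (S p b - Q p.2 b)^2 =
        (S p b)^2 + (Q p.2 b)^2 - 2 * (S p b * Q p.2 b) := fun p b => by ring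
    have hSS : ∑ p : Fin n × Fin d, ∑ b, (S p b)^2 = (n:ℝ)*(d:ℝ) := by
      rw [Fintype.sum_prod_type]
      calc ∑ i : Fin n, ∑ a, ∑ b, (S (i,a) b)^2 = ∑ _i : Fin n, (d:ℝ) :=
            Finset.sum_congr rfl fun i _ => hFSblk i
        _ = (n:ℝ)*(d:ℝ) := by
            rw [Finset.sum_const, Finset.card_univ, Fintype.card_fin, nsmul_eq_mul]
    have hQQ : ∑ p : Fin n × Fin d, ∑ b, (Q p.2 b)^2 = (n:ℝ)*(d:ℝ) := by
      rw [Fintype.sum_prod_type]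
      have hFSQ : FS Q = (d:ℝ) := by
        rw [FS_eq_trace, hQ.2, trace_one]; simp
      calc ∑ _i : Fin n, ∑ a, ∑ b, (Q a b)^2 = ∑ _i : Fin n, (d:ℝ) :=
            Finset.sum_congr rfl fun i _ => hFSQ
        _ = (n:ℝ)*(d:ℝ) := by
            rw [Finset.sum_const, Finset.card_univ, Fintype.card_fin, nsmul_eq_mul]
    have hSQ : ∑ p : Fin n × Fin d, ∑ b, S p b * Q p.2 b = trace (Qᵀ * M) := by
      rw [htrQ Q, Fintype.sum_prod_type]
    calc FS (S - Zmat n d * Q) = ∑ p : Fin n × Fin d, ∑ b, (S p b - Q p.2 b)^2 := h1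
      _ = ∑ p : Fin n × Fin d, ∑ b,
            ((S p b)^2 + (Q p.2 b)^2 - 2 * (S p b * Q p.2 b)) := by
          exact Finset.sum_congr rfl fun p _ => Finset.sum_congr rfl fun b _ => h2 p b
      _ = (∑ p : Fin n × Fin d, ∑ b, (S p b)^2) + (∑ p : Fin n × Fin d, ∑ b, (Q p.2 b)^2)
            - 2 * (∑ p : Fin n × Fin d, ∑ b, S p b * Q p.2 b) := by
          simp only [Finset.sum_add_distrib, Finset.sum_sub_distrib, Finset.mul_sum]
      _ = 2*((n:ℝ)*(d:ℝ)) - 2 * trace (Qᵀ * M) := by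
          rw [hSS, hQQ, hSQ]; ring
  -- the deficiency t
  set t : ℝ := (n:ℝ)*(d:ℝ) - trace P with htdef
  have htsum : t = ∑ i : Fin d, ((n:ℝ) - μ i) := by
    rw [htdef, htP, Finset.sum_sub_distrib, Finset.sum_const, Finset.card_univ,
      Fintype.card_fin, nsmul_eq_mul]
    ring
  have ht0 : 0 ≤ t := by
    rw [htsum]
    exact Finset.sum_nonneg fun i _ => by linarith [hμn i]
  -- dF lower bound
  have hdF : Real.sqrt (2*t) ≤ dF S (Zmat n d) := by
    apply le_csInf
    · exact ⟨frob (S - Zmat n d * 1), 1, ⟨by simp, by simp⟩, rfl⟩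
    · rintro r ⟨Q, hQ, rfl⟩
      rw [frob_eq_sqrt_FS]
      apply Real.sqrt_le_sqrt
      rw [hexpand Q hQ]
      have hle := hmax Q hQ
      rw [htdef]
      linarith
  have ht : t ≤ ε^2 * (n:ℝ) * (d:ℝ) / 8 := by
    have h1 : Real.sqrt (2*t) ≤ ε/2 * Real.sqrt ((n:ℝ)*(d:ℝ)) := le_trans hdF hclose
    have h2 : 2*t ≤ (ε/2 * Real.sqrt ((n:ℝ)*(d:ℝ)))^2 := by
      have hs := Real.sq_sqrt (show (0:ℝ) ≤ 2*t by linarith)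
      rw [← hs]
      exact pow_le_pow_left₀ (Real.sqrt_nonneg _) h1 2
    have h3 : (ε/2 * Real.sqrt ((n:ℝ)*(d:ℝ)))^2 = ε^2 * (n:ℝ) * (d:ℝ) / 4 := by
      rw [mul_pow, Real.sq_sqrt (by positivity)]
      ring
    rw [h3] at h2
    linarith
  -- Frobenius computation of M - n R
  have hfac : M - (n:ℝ) • R = R * (P - (n:ℝ) • 1) := by
    rw [Matrix.mul_sub]
    congr 1
    · rw [hPdef, ← mul_assoc, hR.1, one_mul]
    · rw [mul_smul_comm, mul_one]
  have hfsR : ∀ X : Matrix (Fin d) (Fin d) ℝ, FS (R * X) = FS X := by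
    intro X
    rw [FS_eq_trace, FS_eq_trace, transpose_mul]
    have : Xᵀ * Rᵀ * (R * X) = Xᵀ * (Rᵀ * R) * X := by noncomm_ring
    rw [this, hR.2, mul_one]
  have hFSP : FS (P - (n:ℝ) • 1) = ∑ i, (μ i - (n:ℝ))^2 := by
    rw [FS_eq_trace]
    have hT : (P - (n:ℝ) • 1)ᵀ = P - (n:ℝ) • 1 := by
      rw [transpose_sub, hsym, transpose_smul, transpose_one]
    rw [hT]
    have hmul : (P - (n:ℝ) • 1) * (P - (n:ℝ) • 1) =
        P * P - (n:ℝ) • P - (n:ℝ) • P + ((n:ℝ)*(n:ℝ)) • 1 := by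
      have h11 : ((n:ℝ) • (1 : Matrix (Fin d) (Fin d) ℝ)) * ((n:ℝ) • 1) =
          ((n:ℝ)*(n:ℝ)) • (1 : Matrix (Fin d) (Fin d) ℝ) := by
        rw [Matrix.smul_mul, Matrix.mul_smul, smul_smul, mul_one]
      have hP1 : P * ((n:ℝ) • 1) = (n:ℝ) • P := by rw [Matrix.mul_smul, mul_one]
      have h1P : ((n:ℝ) • 1) * P = (n:ℝ) • P := by rw [Matrix.smul_mul, one_mul]
      rw [Matrix.sub_mul, Matrix.mul_sub, Matrix.mul_sub, h11, hP1, h1P]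
      abel
    rw [hmul, trace_add, trace_sub, trace_sub, trace_smul, trace_smul,
      trace_one, htPP, htP]
    have : ∑ i, (μ i - (n:ℝ))^2 =
        (∑ i, (μ i)^2) - 2*(n:ℝ)*(∑ i, μ i) + (n:ℝ)*(n:ℝ)*(d:ℝ) := by
      have hexp : ∀ i : Fin d, (μ i - (n:ℝ))^2 =
          (μ i)^2 - 2*(n:ℝ)*(μ i) + (n:ℝ)*(n:ℝ) := fun i => by ring
      rw [Finset.sum_congr rfl fun i _ => hexp i]
      rw [Finset.sum_add_distrib, Finset.sum_sub_distrib, ← Finset.mul_sum,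
        Finset.sum_const, Finset.card_univ, Fintype.card_fin, nsmul_eq_mul]
      ring
    rw [this]
    simp only [smul_eq_mul, Fintype.card_fin]
    ring
  have hsumle : ∑ i, (μ i - (n:ℝ))^2 ≤ t^2 := by
    have hti : ∀ i : Fin d, (n:ℝ) - μ i ≤ t := by
      intro i
      rw [htsum]
      exact Finset.single_le_sum (f := fun i => (n:ℝ) - μ i)
        (fun j _ => by
          show (0:ℝ) ≤ (n:ℝ) - μ j
          linarith [hμn j]) (Finset.mem_univ i)
    calc ∑ i, (μ i - (n:ℝ))^2 = ∑ i, ((n:ℝ) - μ i)^2 :=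
          Finset.sum_congr rfl fun i _ => by ring
      _ ≤ ∑ i, ((n:ℝ) - μ i) * t := by
          apply Finset.sum_le_sum
          intro i _
          rw [sq]
          exact mul_le_mul_of_nonneg_left (hti i) (by linarith [hμn i])
      _ = (∑ i, ((n:ℝ) - μ i)) * t := (Finset.sum_mul _ _ _).symm
      _ = t * t := by rw [← htsum]
      _ = t^2 := (sq t).symm
  refine ⟨R, hR, ?_⟩
  rw [frob_eq_sqrt_FS, hfac, hfsR, hFSP]
  calc Real.sqrt (∑ i, (μ i - (n:ℝ))^2) ≤ Real.sqrt (t^2) := Real.sqrt_le_sqrt hsumle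
    _ = |t| := Real.sqrt_sq_eq_abs t
    _ = t := abs_of_nonneg ht0
    _ ≤ ε^2 * (n:ℝ) * (d:ℝ) / 8 := ht
end
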